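/- arXiv:1607.02482 — 2 statements merged into one kernel-verified Lean document; each statement's English description precedes it below -/
import Mathlib

section
/- Let (R, m) be a finite local ring and π(x) any π-polynomial. If the ideal Z(R) of polynomials vanishing on R is principal, then Z(R) = (π(x)). -/
open Polynomial IsLocalRing

/-- The ideal of polynomials in `R[X]` mapping every element of `S` into the ideal `I`. -/
def zeroFunctionsInto {R : Type*} [CommRing R] (S : Set R) (I : Ideal R) : Ideal R[X] where
  carrier := {f | ∀ s ∈ S, f.eval s ∈ I}
  add_mem' := fun hf hg s hs => by simpa using I.add_mem (hf s hs) (hg s hs)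
  zero_mem' := fun s _ => by simp
  smul_mem' := fun c f hf s hs => by simpa using I.mul_mem_left (c.eval s) (hf s hs)

/-- The ideal of polynomials vanishing on the subset `S`. -/
def zeroFunctions {R : Type*} [CommRing R] (S : Set R) : Ideal R[X] :=
  zeroFunctionsInto S ⊥

theorem mem_zeroFunctions_univ {R : Type*} [CommRing R] {f : R[X]} :
    f ∈ zeroFunctions (Set.univ : Set R) ↔ ∀ r : R, f.eval r = 0 := by
  constructor
  · intro h r; simpa using h r (Set.mem_univ r)
  · intro h r _; simpa using h r

theorem card_le_natDegree_of_roots {K : Type*} [Field K] {p : K[X]} (hp : p ≠ 0)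
    {n : ℕ} {b : Fin n → K} (hinj : Function.Injective b)
    (hb : ∀ i, p.IsRoot (b i)) : n ≤ p.natDegree := by
  classical
  have h1 : (Finset.image b Finset.univ).val ⊆ p.roots := by
    intro x hx
    simp only [Finset.mem_val, Finset.mem_image] at hx
    obtain ⟨i, _, rfl⟩ := hx
    exact (Polynomial.mem_roots hp).mpr (hb i)
  have h2 := Polynomial.card_le_degree_of_subset_roots h1
  rwa [Finset.card_image_of_injective _ hinj, Finset.card_univ, Fintype.card_fin] at h2

theorem key_max_eq_bot {R : Type*} [CommRing R] [Finite R] [IsLocalRing R]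
    (q : ℕ) (c : Fin q → R) (hc : Function.Bijective (fun i => residue R (c i)))
    (h : (zeroFunctions (Set.univ : Set R)).IsPrincipal) :
    maximalIdeal R = ⊥ := by
  classical
  cases nonempty_fintype R
  set m : Ideal R := maximalIdeal R with hm
  set π : R[X] := ∏ i, (X - C (c i)) with hπ
  have hq : 0 < q := by
    obtain ⟨i, -⟩ := hc.2 0
    exact i.pos
  have hπmonic : π.Monic := monic_prod_of_monic _ _ fun i _ => monic_X_sub_C _
  have hπdeg : π.natDegree = q := by
    rw [hπ, natDegree_prod_of_monic _ _ fun i _ => monic_X_sub_C _]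
    simp
  have hπm : ∀ r : R, π.eval r ∈ m := by
    intro r
    obtain ⟨i, hi⟩ := hc.2 (residue R r)
    rw [← residue_eq_zero_iff]
    rw [hπ, eval_prod, map_prod]
    refine Finset.prod_eq_zero (Finset.mem_univ i) ?_
    simp only [eval_sub, eval_X, eval_C, map_sub]
    rw [show residue R (c i) = residue R r from hi, sub_self]
  obtain ⟨g₀, hg₀⟩ := h.principal
  rw [Ideal.submodule_span_eq] at hg₀
  have hg₀mem : g₀ ∈ zeroFunctions (Set.univ : Set R) := by
    rw [hg₀]; exact Ideal.mem_span_singleton_self g₀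
  have hg₀eval : ∀ r : R, g₀.eval r = 0 := mem_zeroFunctions_univ.mp hg₀mem
  -- the reduction of g₀
  set res := residue R with hres
  set G : (ResidueField R)[X] := g₀.map res with hG
  -- G is nonzero
  have hPmem : (∏ r : R, (X - C r)) ∈ zeroFunctions (Set.univ : Set R) := by
    rw [mem_zeroFunctions_univ]
    intro r
    rw [eval_prod]
    exact Finset.prod_eq_zero (Finset.mem_univ r) (by simp)
  have hG0 : G ≠ 0 := by
    rw [hg₀, Ideal.mem_span_singleton] at hPmem
    obtain ⟨w, hw⟩ := hPmem
    intro hGz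
    have hmonic : ((∏ r : R, (X - C r)).map res).Monic :=
      (monic_prod_of_monic _ _ fun i _ => monic_X_sub_C _).map res
    rw [hw, Polynomial.map_mul, ← hG, hGz, zero_mul] at hmonic
    exact (Monic.ne_zero hmonic) rfl
  have hGroots : ∀ i : Fin q, G.IsRoot (res (c i)) := by
    intro i
    show eval (res (c i)) (g₀.map res) = 0
    rw [eval_map, eval₂_at_apply, hg₀eval, map_zero]
  set d : ℕ := G.natDegree with hd
  have hqd : q ≤ d := card_le_natDegree_of_roots hG0 hc.1 hGroots
  have hGcoeff : ∀ i, G.coeff i = res (g₀.coeff i) := fun i => coeff_map res i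
  have hu : IsUnit (g₀.coeff d) := by
    have : res (g₀.coeff d) ≠ 0 := by
      rw [← hGcoeff]; exact mt leadingCoeff_eq_zero.mp hG0
    rw [Ne, residue_eq_zero_iff] at this
    by_contra hnu
    exact this ((mem_maximalIdeal _).mpr hnu)
  have hcoeffm : ∀ i, d < i → g₀.coeff i ∈ m := by
    intro i hi
    rw [← residue_eq_zero_iff, ← hGcoeff]
    exact coeff_eq_zero_of_natDegree_lt hi
  -- nilpotency
  have hnil : ∃ n : ℕ, m ^ n = ⊥ := by
    have h1 : IsNilpotent (Ideal.jacobson (⊥ : Ideal R)) :=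
      IsArtinianRing.isNilpotent_jacobson_bot
    rw [IsLocalRing.jacobson_eq_maximalIdeal ⊥ bot_ne_top] at h1
    exact h1
  set t : ℕ := Nat.find hnil with htdef
  have ht : m ^ t = ⊥ := Nat.find_spec hnil
  have ht1 : t ≠ 0 := by
    intro h0
    rw [h0, pow_zero, Ideal.one_eq_top] at ht
    exact one_ne_zero ((Submodule.eq_bot_iff _).mp ht 1 Submodule.mem_top)
  have hs : m ^ (t - 1) ≠ ⊥ := Nat.find_min hnil (by omega)
  have hst : ∀ x ∈ m ^ (t - 1), ∀ y ∈ m, x * y = 0 := by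
    intro x hx y hy
    have : x * y ∈ m ^ (t - 1) * m := Ideal.mul_mem_mul hx hy
    rw [← pow_succ, Nat.sub_add_cancel (by omega), ht] at this
    simpa using this
  obtain ⟨a, ham, ha0⟩ : ∃ a, a ∈ m ^ (t - 1) ∧ a ≠ 0 := by
    by_contra hcon
    push_neg at hcon
    exact hs ((Submodule.eq_bot_iff _).mpr hcon)
  -- a • π is in the ideal
  have haπ : C a * π ∈ zeroFunctions (Set.univ : Set R) := by
    rw [mem_zeroFunctions_univ]
    intro r
    rw [eval_mul, eval_C]
    exact hst a ham _ (hπm r)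
  obtain ⟨μ, hμ⟩ : ∃ μ, μ * g₀ = C a * π := by
    rw [hg₀, Ideal.mem_span_singleton'] at haπ; exact haπ
  have haπ0 : C a * π ≠ 0 := by
    intro hz
    have := congrArg (fun p => coeff p q) hz
    simp only [coeff_C_mul, coeff_zero] at this
    rw [← hπdeg, hπmonic.coeff_natDegree, mul_one] at this
    exact ha0 this
  -- key coefficient identity
  have hkey : ∀ e : ℕ, μ.coeff e * g₀.coeff d =
      (C a * π).coeff (d + e) - ∑ x ∈ (Finset.HasAntidiagonal.antidiagonal (d+e)).erase (e, d),
        μ.coeff x.1 * g₀.coeff x.2 := by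
    intro e
    have h1 : (μ * g₀).coeff (d + e) = ∑ x ∈ Finset.HasAntidiagonal.antidiagonal (d+e),
        μ.coeff x.1 * g₀.coeff x.2 := coeff_mul μ g₀ (d+e)
    have h2 : ((e, d) : ℕ × ℕ) ∈ Finset.HasAntidiagonal.antidiagonal (d+e) := by
      rw [Finset.HasAntidiagonal.mem_antidiagonal]; omega
    rw [← hμ, h1, ← Finset.add_sum_erase _ _ h2]
    ring
  -- all coefficients of μ lie in m ^ (t-1)
  have hμmem : ∀ j, μ.coeff j ∈ m ^ (t-1) := by
    suffices H : ∀ v, v ≤ t - 1 → ∀ j, μ.coeff j ∈ m ^ v by exact H (t-1) le_rfl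
    intro v
    induction v with
    | zero => intro _ j; rw [pow_zero, Ideal.one_eq_top]; exact Submodule.mem_top
    | succ v ih =>
      intro hv
      have ihv := ih (by omega)
      by_contra hcon
      push_neg at hcon
      obtain ⟨j, hj⟩ := hcon
      have hjbound : ∀ j', μ.coeff j' ∉ m ^ (v+1) → j' ≤ μ.natDegree := by
        intro j' hj'
        by_contra hb
        push_neg at hb
        exact hj' (by rw [coeff_eq_zero_of_natDegree_lt hb]; exact Submodule.zero_mem _)
      set S : Finset ℕ := (Finset.range (μ.natDegree + 1)).filter
        (fun j' => μ.coeff j' ∉ m ^ (v+1)) with hS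
      have hSmem : ∀ j', j' ∈ S ↔ μ.coeff j' ∉ m ^ (v+1) := by
        intro j'
        rw [hS, Finset.mem_filter, Finset.mem_range]
        exact ⟨fun h => h.2, fun h => ⟨Nat.lt_succ_of_le (hjbound j' h), h⟩⟩
      have hSne : S.Nonempty := ⟨j, (hSmem j).mpr hj⟩
      set e := S.max' hSne with he
      have hemem : μ.coeff e ∉ m ^ (v+1) := (hSmem e).mp (S.max'_mem hSne)
      have hgt : ∀ j', e < j' → μ.coeff j' ∈ m ^ (v+1) := by
        intro j' hj'
        by_contra hj'n
        exact absurd (S.le_max' j' ((hSmem j').mpr hj'n)) (not_le.mpr hj')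
      have hsum : ∑ x ∈ (Finset.HasAntidiagonal.antidiagonal (d+e)).erase (e, d),
          μ.coeff x.1 * g₀.coeff x.2 ∈ m ^ (v+1) := by
        refine Submodule.sum_mem _ ?_
        intro x hx
        obtain ⟨hne, hmemad⟩ := Finset.mem_erase.mp hx
        have hxsum : x.1 + x.2 = d + e := Finset.HasAntidiagonal.mem_antidiagonal.mp hmemad
        rcases lt_trichotomy x.2 d with hlt | heq | hgt2
        · exact Ideal.mul_mem_right _ _ (hgt x.1 (by omega))
        · exact absurd (Prod.ext (by omega) heq) hne
        · have h3 := Ideal.mul_mem_mul (ihv x.1) (hcoeffm _ hgt2)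
          rwa [← pow_succ] at h3
      have hLHS : (C a * π).coeff (d+e) ∈ m ^ (v+1) := by
        rw [coeff_C_mul]
        exact Ideal.mul_mem_right _ _ ((Ideal.pow_le_pow_right (by omega)) ham)
      have hmm : μ.coeff e * g₀.coeff d ∈ m ^ (v+1) := by
        rw [hkey e]; exact Submodule.sub_mem _ hLHS hsum
      obtain ⟨U, hU⟩ := hu
      apply hemem
      have h4 : μ.coeff e * g₀.coeff d * ↑U⁻¹ ∈ m ^ (v+1) := Ideal.mul_mem_right _ _ hmm
      rwa [mul_assoc, ← hU, Units.mul_inv, mul_one] at h4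
  have hμ0 : μ ≠ 0 := by
    intro hz; rw [hz, zero_mul] at hμ; exact haπ0 hμ.symm
  -- d = q
  have hdq : d = q := by
    refine le_antisymm ?_ hqd
    set e := μ.natDegree with hedef
    have hsum0 : ∑ x ∈ (Finset.HasAntidiagonal.antidiagonal (d+e)).erase (e, d),
        μ.coeff x.1 * g₀.coeff x.2 = 0 := by
      refine Finset.sum_eq_zero ?_
      intro x hx
      obtain ⟨hne, hmemad⟩ := Finset.mem_erase.mp hx
      have hxsum : x.1 + x.2 = d + e := Finset.HasAntidiagonal.mem_antidiagonal.mp hmemad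
      rcases lt_trichotomy x.2 d with hlt | heq | hgt2
      · rw [coeff_eq_zero_of_natDegree_lt (show μ.natDegree < x.1 by omega), zero_mul]
      · exact absurd (Prod.ext (by omega) heq) hne
      · exact hst _ (hμmem x.1) _ (hcoeffm _ hgt2)
    have hne0 : μ.coeff e * g₀.coeff d ≠ 0 := by
      intro hz
      obtain ⟨U, hU⟩ := hu
      have h5 : μ.coeff e = 0 := by
        have h6 := congrArg (· * (↑U⁻¹ : R)) hz
        simpa [mul_assoc, ← hU, Units.mul_inv] using h6
      exact (mt leadingCoeff_eq_zero.mp hμ0) h5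
    rw [hkey e, hsum0, sub_zero, coeff_C_mul] at hne0
    have h7 : π.coeff (d + e) ≠ 0 := fun hz => hne0 (by rw [hz, mul_zero])
    have h8 : ¬ (π.natDegree < d + e) := fun hlt => h7 (coeff_eq_zero_of_natDegree_lt hlt)
    omega
  -- factor out the root c i₀
  set i₀ : Fin q := ⟨0, hq⟩ with hi₀
  obtain ⟨g₁, hg₁⟩ := (dvd_iff_isRoot.mpr (hg₀eval (c i₀)) : (X - C (c i₀)) ∣ g₀)
  set p : (ResidueField R)[X] := g₁.map res with hp
  have hmapfac : G = (X - C (res (c i₀))) * p := by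
    rw [hG, hg₁, Polynomial.map_mul, Polynomial.map_sub, map_X, map_C]
  have hp0 : p ≠ 0 := by
    intro hz; rw [hz, mul_zero] at hmapfac; exact hG0 hmapfac
  have hpdeg : p.natDegree = q - 1 := by
    have h1 : G.natDegree = 1 + p.natDegree := by
      rw [hmapfac, natDegree_mul (X_sub_C_ne_zero _) hp0, natDegree_X_sub_C]
    rw [← hd, hdq] at h1
    omega
  have hproots : ∀ i : Fin q, i ≠ i₀ → p.IsRoot (res (c i)) := by
    intro i hi
    have h0 := hGroots i
    rw [hmapfac] at h0
    have h0' : (res (c i) - res (c i₀)) * p.eval (res (c i)) = 0 := by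
      simpa [IsRoot, eval_mul] using h0
    rcases mul_eq_zero.mp h0' with h1 | h1
    · exact absurd (hc.1 (by rwa [sub_eq_zero] at h1)) hi
    · exact h1
  have hproot0 : ¬ p.IsRoot (res (c i₀)) := by
    intro hroot
    have hall : ∀ i : Fin q, p.IsRoot (res (c i)) := by
      intro i
      by_cases hi : i = i₀
      · rw [hi]; exact hroot
      · exact hproots i hi
    have := card_le_natDegree_of_roots hp0 hc.1 hall
    omega
  -- conclude m = ⊥
  rw [Submodule.eq_bot_iff]
  intro ε hε
  have h0 : (c i₀ + ε - c i₀) * g₁.eval (c i₀ + ε) = 0 := by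
    have h1 := hg₀eval (c i₀ + ε)
    rw [hg₁, eval_mul, eval_sub, eval_X, eval_C] at h1
    exact h1
  rw [show c i₀ + ε - c i₀ = ε by ring] at h0
  have hunit : IsUnit (g₁.eval (c i₀ + ε)) := by
    have h1 : p.eval (res (c i₀ + ε)) = res (g₁.eval (c i₀ + ε)) := by
      rw [hp, eval_map, eval₂_at_apply]
    have h2 : res (c i₀ + ε) = res (c i₀) := by
      rw [map_add, show res ε = 0 from (residue_eq_zero_iff ε).mpr hε, add_zero]
    have h3 : res (g₁.eval (c i₀ + ε)) ≠ 0 := by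
      rw [← h1, h2]; exact hproot0
    rw [Ne, residue_eq_zero_iff] at h3
    by_contra hnu
    exact h3 ((mem_maximalIdeal _).mpr hnu)
  obtain ⟨U, hU⟩ := hunit
  have h9 := congrArg (· * (↑U⁻¹ : R)) h0
  simpa [mul_assoc, ← hU, Units.mul_inv] using h9


theorem statement_7 {R : Type*} [CommRing R] [Finite R] [IsLocalRing R]
    (q : ℕ) (c : Fin q → R) (hc : Function.Bijective (fun i => residue R (c i)))
    (h : (zeroFunctions (Set.univ : Set R)).IsPrincipal) :
    zeroFunctions (Set.univ : Set R) = Ideal.span {∏ i, (X - C (c i))} := by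
  classical
  have hm : maximalIdeal R = ⊥ := key_max_eq_bot q c hc h
  have hres_inj : Function.Injective (residue R) := by
    intro x y hxy
    have hxy' : x - y ∈ maximalIdeal R := by
      rw [← residue_eq_zero_iff, map_sub, hxy, sub_self]
    rw [hm, Ideal.mem_bot] at hxy'
    exact sub_eq_zero.mp hxy'
  have hcinj : Function.Injective c := fun i j hij => hc.1 (by simp [hij])
  have hcsurj : ∀ r : R, ∃ i, c i = r := by
    intro r
    obtain ⟨i, hi⟩ := hc.2 (residue R r)
    exact ⟨i, hres_inj hi⟩
  have hunit : ∀ x : R, x ≠ 0 → IsUnit x := by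
    intro x hx
    by_contra hnu
    have hxm : x ∈ maximalIdeal R := (mem_maximalIdeal _).mpr hnu
    rw [hm, Ideal.mem_bot] at hxm
    exact hx hxm
  apply le_antisymm
  · -- Z ⊆ (π)
    have key2 : ∀ s : Finset (Fin q), ∀ g : R[X], (∀ i ∈ s, g.eval (c i) = 0) →
        (∏ i ∈ s, (X - C (c i))) ∣ g := by
      intro s
      induction s using Finset.induction_on with
      | empty => intro g _; simp
      | @insert i s₀ hi ih =>
        intro g hg
        obtain ⟨g', rfl⟩ := (dvd_iff_isRoot.mpr (hg i (Finset.mem_insert_self i s₀)) :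
          (X - C (c i)) ∣ g)
        have h2 : ∀ j ∈ s₀, g'.eval (c j) = 0 := by
          intro j hj
          have h3 := hg j (Finset.mem_insert_of_mem hj)
          rw [eval_mul, eval_sub, eval_X, eval_C] at h3
          have hne : c j - c i ≠ 0 :=
            sub_ne_zero.mpr fun hh => hi (hcinj hh ▸ hj)
          obtain ⟨U, hU⟩ := hunit _ hne
          have h4 := congrArg ((↑U⁻¹ : R) * ·) h3
          simpa [← mul_assoc, ← hU, Units.inv_mul] using h4
        rw [Finset.prod_insert hi]
        exact mul_dvd_mul_left _ (ih g' h2)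
    intro f hf
    rw [Ideal.mem_span_singleton]
    exact key2 Finset.univ f (fun i _ => mem_zeroFunctions_univ.mp hf (c i))
  · rw [Ideal.span_le, Set.singleton_subset_iff]
    rw [SetLike.mem_coe, mem_zeroFunctions_univ]
    intro r
    obtain ⟨i, hi⟩ := hcsurj r
    rw [eval_prod]
    exact Finset.prod_eq_zero (Finset.mem_univ i) (by simp [hi])
end

section
/- Let (R, m) be a finite local ring. Then R is a field if and only if the ideal Z(m) of polynomials vanishing on m is principal, and in that case Z(m) = (x). -/
open Polynomial IsLocalRing

theorem mem_zf {R : Type*} [CommRing R] {S : Set R} {f : R[X]} :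
    f ∈ zeroFunctions S ↔ ∀ s ∈ S, f.eval s = 0 := Iff.rfl

theorem isField_of_principal {R : Type*} [CommRing R] [Finite R] [IsLocalRing R]
    (h : (zeroFunctions (maximalIdeal R : Set R)).IsPrincipal) : IsField R := by
  by_contra hF
  classical
  set m := maximalIdeal R with hmdef
  have hm : m ≠ ⊥ := fun e => hF (isField_iff_maximalIdeal_eq.mpr e)
  obtain ⟨g, hg⟩ := h.principal
  -- nilpotency
  obtain ⟨k, hk⟩ : IsNilpotent m := by
    have := IsArtinianRing.isNilpotent_jacobson_bot (R := R)
    rwa [jacobson_eq_maximalIdeal ⊥ bot_ne_top] at this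
  have hk' : m ^ k = ⊥ := hk
  have hgZ : g ∈ zeroFunctions (m : Set R) := by rw [hg]; exact Ideal.mem_span_singleton_self g
  have hg0 : g.coeff 0 = 0 := by
    rw [coeff_zero_eq_eval_zero]
    exact (mem_zf.mp hgZ) 0 (by simp)
  -- quotient field
  haveI : m.IsMaximal := maximalIdeal.isMaximal R
  let mk := Ideal.Quotient.mk m
  -- the product polynomial
  let M : Finset R := (Set.toFinite (m : Set R)).toFinset
  have hMmem : ∀ a : R, a ∈ M ↔ a ∈ m := by intro a; simp [M]
  have hP : (∏ a ∈ M, (X - C a)) ∈ zeroFunctions (m : Set R) := by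
    rw [mem_zf]
    intro s hs
    rw [eval_prod]
    exact Finset.prod_eq_zero ((hMmem s).mpr hs) (by simp)
  have hgP : g ∣ ∏ a ∈ M, (X - C a) := by
    have h2 : (∏ a ∈ M, (X - C a)) ∈ Ideal.span {g} := by
      have := hP; rw [hg] at this; exact this
    exact Ideal.mem_span_singleton.mp h2
  have hdvd : g.map mk ∣ X ^ M.card := by
    have := Polynomial.map_dvd mk hgP
    rwa [Polynomial.map_prod, show (∏ a ∈ M, ((X : R[X]) - C a).map mk) = X ^ M.card by
      rw [Finset.prod_congr rfl (fun a ha => show ((X : R[X]) - C a).map mk = X by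
        rw [Polynomial.map_sub, map_X, map_C, Ideal.Quotient.eq_zero_iff_mem.mpr ((hMmem a).mp ha),
          map_zero, sub_zero]), Finset.prod_const X]] at this
  obtain ⟨d, _, hass⟩ := (dvd_prime_pow Polynomial.prime_X M.card).mp hdvd
  obtain ⟨u, hu⟩ := hass.symm
  obtain ⟨c, hcu, hc⟩ := Polynomial.isUnit_iff.mp u.isUnit
  have hcoeff : ∀ i, mk (g.coeff i) = if i = d then c else 0 := by
    intro i
    have key : (C c) * X ^ d = g.map mk := by rw [hc, mul_comm]; exact hu
    have : (g.map mk).coeff i = ((C c) * X ^ d).coeff i := by rw [key]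
    rwa [coeff_map, coeff_C_mul_X_pow] at this
  have hc0 : c ≠ 0 := hcu.ne_zero
  have hmem : ∀ i, i ≠ d → g.coeff i ∈ m := by
    intro i hi
    rw [← Ideal.Quotient.eq_zero_iff_mem]
    rw [show (Ideal.Quotient.mk m) (g.coeff i) = mk (g.coeff i) from rfl, hcoeff, if_neg hi]
  have hunit : IsUnit (g.coeff d) := by
    by_contra hnu
    have : g.coeff d ∈ m := hnu
    rw [← Ideal.Quotient.eq_zero_iff_mem] at this
    rw [show (Ideal.Quotient.mk m) (g.coeff d) = mk (g.coeff d) from rfl, hcoeff, if_pos rfl] at this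
    exact hc0 this
  have hd0 : d ≠ 0 := by
    intro hd
    rw [hd] at hunit
    rw [hg0] at hunit
    exact not_isUnit_zero hunit
  rcases Nat.lt_or_ge d 2 with hdlt | hd2
  · -- case d = 1
    have hd1 : d = 1 := by omega
    subst hd1
    have hsub : m ≤ m ^ 3 := by
      intro s hs
      have h0 : g.eval s = 0 := (mem_zf.mp hgZ) s hs
      rw [eval_eq_sum_range] at h0
      have hne : g.coeff 1 ≠ 0 := fun e => by rw [e] at hunit; exact not_isUnit_zero hunit
      have hdeg : 1 ≤ g.natDegree := le_natDegree_of_ne_zero hne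
      have h1mem : 1 ∈ Finset.range (g.natDegree + 1) := Finset.mem_range.mpr (by omega)
      rw [← Finset.add_sum_erase _ _ h1mem] at h0
      have hterm : g.coeff 1 * s ^ 1 ∈ m ^ 3 := by
        rw [eq_neg_of_add_eq_zero_left h0]
        refine neg_mem (Ideal.sum_mem _ fun i hi => ?_)
        have hi1 : i ≠ 1 := Finset.ne_of_mem_erase hi
        rcases Nat.eq_zero_or_pos i with h0' | hpos
        · subst h0'; simp [hg0]
        · have h1 : g.coeff i ∈ m := hmem i hi1
          have h2 : s ^ i ∈ m ^ 2 := by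
            have he : s ^ i = s ^ 2 * s ^ (i - 2) := by rw [← pow_add]; congr 1; omega
            rw [he]
            exact Ideal.mul_mem_right _ _ (Ideal.pow_mem_pow hs 2)
          have h3 := Ideal.mul_mem_mul h1 h2
          rwa [show m * m ^ 2 = m ^ 3 by ring] at h3
      obtain ⟨v, hv⟩ := hunit
      have hs3 : s = ↑v⁻¹ * (g.coeff 1 * s ^ 1) := by
        rw [pow_one, ← hv, ← mul_assoc, ← Units.val_mul, inv_mul_cancel v, Units.val_one, one_mul]
      rw [hs3]
      exact Ideal.mul_mem_left _ _ hterm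
    have hle : ∀ n : ℕ, m ≤ m ^ (n + 1) := by
      intro n; induction n with
      | zero => simp [pow_one]
      | succ n ih =>
        calc m ≤ m ^ 3 := hsub
        _ = m ^ 2 * m := by ring
        _ ≤ m ^ 2 * m ^ (n + 1) := Ideal.mul_mono_right ih
        _ = m ^ (n + 3) := by ring
        _ ≤ m ^ (n + 2) := Ideal.pow_le_pow_right (by omega)
    rcases k with _ | k'
    · rw [pow_zero, Ideal.one_eq_top] at hk'
      have h1 : (1 : R) ∈ (⊥ : Ideal R) := by rw [← hk']; exact Submodule.mem_top
      simp at h1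
    · exact hm (le_bot_iff.mp (le_trans (hle k') (le_of_eq hk')))
  · -- case d ≥ 2
    have hex : ∃ n, m ^ n = ⊥ := ⟨k, hk'⟩
    set k₀ := Nat.find hex with hk₀def
    have hk₀ : m ^ k₀ = ⊥ := Nat.find_spec hex
    have h10 : k₀ ≠ 0 := by
      intro e
      rw [e, pow_zero, Ideal.one_eq_top] at hk₀
      have h1 : (1 : R) ∈ (⊥ : Ideal R) := by rw [← hk₀]; exact Submodule.mem_top
      simp at h1
    have h11 : k₀ ≠ 1 := fun e => hm (by rwa [e, pow_one] at hk₀)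
    have hprev : m ^ (k₀ - 1) ≠ ⊥ := Nat.find_min hex (by omega)
    obtain ⟨t, htm, ht0⟩ := (Submodule.ne_bot_iff _).mp hprev
    have htm' : t ∈ m := Ideal.pow_le_self (by omega) htm
    have htann : ∀ s ∈ m, t * s = 0 := by
      intro s hs
      have h1 : t * s ∈ m ^ (k₀ - 1) * m := Ideal.mul_mem_mul htm hs
      rw [show m ^ (k₀ - 1) * m = m ^ k₀ by rw [← pow_succ]; congr 1; omega, hk₀] at h1
      simpa using h1
    have htX : (C t * X : R[X]) ∈ zeroFunctions (m : Set R) := by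
      rw [mem_zf]; intro s hs
      simp [htann s hs]
    obtain ⟨q, hq⟩ : g ∣ C t * X := by
      rw [hg] at htX
      exact Ideal.mem_span_singleton.mp htX
    have main : ∀ n : ℕ, ∀ i : ℕ, q.coeff i ∈ m ^ n := by
      intro n; induction n with
      | zero => intro i; rw [pow_zero, Ideal.one_eq_top]; exact Submodule.mem_top
      | succ n ih =>
        intro i
        have hco : (C t * X).coeff (d + i) = 0 := by
          rw [coeff_C_mul, coeff_X, if_neg (by omega : ¬ 1 = d + i), mul_zero]
        rw [hq, coeff_mul] at hco
        have hmem' : ((d, i)) ∈ Finset.HasAntidiagonal.antidiagonal (d + i) := by simp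
        rw [← Finset.add_sum_erase _ _ hmem'] at hco
        have h2 : g.coeff d * q.coeff i ∈ m ^ (n + 1) := by
          rw [eq_neg_of_add_eq_zero_left hco]
          refine neg_mem (Ideal.sum_mem _ fun x hx => ?_)
          have hx1 : x ≠ (d, i) := Finset.ne_of_mem_erase hx
          have hx2 : x.1 + x.2 = d + i := Finset.HasAntidiagonal.mem_antidiagonal.mp (Finset.mem_of_mem_erase hx)
          have hxd : x.1 ≠ d := by
            intro e
            exact hx1 (Prod.ext e (by omega))
          have h3 := Ideal.mul_mem_mul (hmem x.1 hxd) (ih x.2)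
          rwa [show m * m ^ n = m ^ (n + 1) by ring] at h3
        obtain ⟨v, hv⟩ := hunit
        have h4 : q.coeff i = ↑v⁻¹ * (g.coeff d * q.coeff i) := by
          rw [← hv, ← mul_assoc, ← Units.val_mul, inv_mul_cancel v, Units.val_one, one_mul]
        rw [h4]
        exact Ideal.mul_mem_left _ _ h2
    have hq0 : q = 0 := by
      ext i
      have h5 := main k i
      rw [hk'] at h5
      simpa using h5
    rw [hq0, mul_zero] at hq
    apply ht0
    have h6 : (C t * X).coeff 1 = 0 := by rw [hq]; simp
    simpa [coeff_C_mul, coeff_X] using h6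


theorem zf_of_bot {R : Type*} [CommRing R] [IsLocalRing R] (h : maximalIdeal R = ⊥) :
    zeroFunctions (maximalIdeal R : Set R) = Ideal.span {(X : R[X])} := by
  ext f
  rw [Ideal.mem_span_singleton, mem_zf, X_dvd_iff]
  constructor
  · intro hf
    have := hf 0 (by simp)
    simpa [coeff_zero_eq_eval_zero] using this
  · intro h0 s hs
    rw [h] at hs
    simp only [SetLike.mem_coe, Ideal.mem_bot] at hs
    subst hs
    rw [← coeff_zero_eq_eval_zero, h0]

theorem statement_8 {R : Type*} [CommRing R] [Finite R] [IsLocalRing R] :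
    (IsField R ↔ (zeroFunctions (maximalIdeal R : Set R)).IsPrincipal) ∧
      ((zeroFunctions (maximalIdeal R : Set R)).IsPrincipal →
        zeroFunctions (maximalIdeal R : Set R) = Ideal.span {(X : R[X])}) := by
  constructor
  · constructor
    · intro hf
      rw [zf_of_bot (isField_iff_maximalIdeal_eq.mp hf)]
      exact ⟨⟨X, rfl⟩⟩
    · exact isField_of_principal
  · intro hp
    exact zf_of_bot (isField_iff_maximalIdeal_eq.mp (isField_of_principal hp))
end
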